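/- Under Assumptions 1–3 on the model, let W̃ = E[W(k)] be the mean interaction matrix and let x̄ be the almost-sure consensus limit of the belief sequences x_i(k). Then: (a) there is a stochastic vector π̄ (the consensus distribution) such that W̃^k converges, as k → ∞, to the rank-one stochastic matrix e π̄ᵀ with all rows equal to π̄ᵀ; and (b) E[x̄] = Σ_{i=1}^n π̄_i x_i(0) = π̄ᵀ x(0). -/

import Mathlib

open MeasureTheory ProbabilityTheory Matrix Filter

noncomputable section

instance matMeas {n : ℕ} : MeasurableSpace (Matrix (Fin n) (Fin n) ℝ) := MeasurableSpace.pi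

/-- the standard basis vector `e_i`. -/
def eVec {n : ℕ} (i : Fin n) : Fin n → ℝ := fun k => if k = i then 1 else 0

/-- `A_{ij} = I − (e_i−e_j)(e_i−e_j)ᵀ/2` : pairwise averaging matrix. -/
def Amat {n : ℕ} (i j : Fin n) : Matrix (Fin n) (Fin n) ℝ :=
  1 - (2⁻¹ : ℝ) • Matrix.vecMulVec (eVec i - eVec j) (eVec i - eVec j)

/-- `J_{ij} = I − (1−ε) e_i (e_i−e_j)ᵀ` : influence matrix. -/
def Jmat {n : ℕ} (ε : ℝ) (i j : Fin n) : Matrix (Fin n) (Fin n) ℝ :=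
  1 - (1 - ε) • Matrix.vecMulVec (eVec i) (eVec i - eVec j)

/-- the common law of the update matrices `W(k)` : with probability
`p_ij β_ij / n` it is `A_ij`, with probability `p_ij α_ij / n` it is `J_ij`,
and with probability `Σ_{i,j} p_ij γ_ij / n` it is the identity. -/
def lawW {n : ℕ} (p α β γ : Fin n → Fin n → ℝ) (ε : ℝ) : Measure (Matrix (Fin n) (Fin n) ℝ) :=
  ∑ i, ∑ j,
    (ENNReal.ofReal (p i j * β i j / n) • Measure.dirac (Amat i j) +
     ENNReal.ofReal (p i j * α i j / n) • Measure.dirac (Jmat ε i j) +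
     ENNReal.ofReal (p i j * γ i j / n) • Measure.dirac (1 : Matrix (Fin n) (Fin n) ℝ))

/-- `isPath E i j L` : there is a directed path of length `L` from `i` to `j`. -/
def isPath {n : ℕ} (E : Fin n → Fin n → Prop) (i j : Fin n) (L : ℕ) : Prop :=
  ∃ f : ℕ → Fin n, f 0 = i ∧ f L = j ∧ ∀ l < L, E (f l) (f (l + 1))


namespace Stmt3Aux

variable {n : ℕ}

lemma pow_entry_nonneg {M : Matrix (Fin n) (Fin n) ℝ} (hnn : ∀ i j, 0 ≤ M i j) :
    ∀ k i j, 0 ≤ (M ^ k) i j := by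
  intro k
  induction k with
  | zero => intro i j; rw [pow_zero, Matrix.one_apply]; split <;> norm_num
  | succ k ih =>
    intro i j
    rw [pow_succ, Matrix.mul_apply]
    exact Finset.sum_nonneg fun a _ => mul_nonneg (ih i a) (hnn a j)

lemma pow_row_sum {M : Matrix (Fin n) (Fin n) ℝ} (hrow : ∀ i, ∑ j, M i j = 1) :
    ∀ k i, ∑ j, (M ^ k) i j = 1 := by
  intro k
  induction k with
  | zero => intro i; simp [Matrix.one_apply]
  | succ k ih =>
    intro i
    rw [pow_succ]
    simp only [Matrix.mul_apply]
    rw [Finset.sum_comm]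
    calc ∑ a, ∑ j, (M ^ k) i a * M a j = ∑ a, (M ^ k) i a * ∑ j, M a j := by
          simp [Finset.mul_sum]
      _ = 1 := by simp [hrow, ih i]

lemma mulVec_le_sup (hne : (Finset.univ : Finset (Fin n)).Nonempty)
    {M : Matrix (Fin n) (Fin n) ℝ} {v : Fin n → ℝ}
    (hnn : ∀ i j, 0 ≤ M i j) (hrow : ∀ i, ∑ j, M i j = 1) (i : Fin n) :
    M.mulVec v i ≤ Finset.univ.sup' hne v := by
  have : M.mulVec v i = ∑ j, M i j * v j := by
    simp [Matrix.mulVec, dotProduct]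
  rw [this]
  calc ∑ j, M i j * v j ≤ ∑ j, M i j * Finset.univ.sup' hne v :=
        Finset.sum_le_sum fun j _ =>
          mul_le_mul_of_nonneg_left (Finset.le_sup' v (Finset.mem_univ j)) (hnn i j)
    _ = Finset.univ.sup' hne v := by rw [← Finset.sum_mul, hrow i, one_mul]

lemma inf_le_mulVec (hne : (Finset.univ : Finset (Fin n)).Nonempty)
    {M : Matrix (Fin n) (Fin n) ℝ} {v : Fin n → ℝ}
    (hnn : ∀ i j, 0 ≤ M i j) (hrow : ∀ i, ∑ j, M i j = 1) (i : Fin n) :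
    Finset.univ.inf' hne v ≤ M.mulVec v i := by
  have : M.mulVec v i = ∑ j, M i j * v j := by
    simp [Matrix.mulVec, dotProduct]
  rw [this]
  calc Finset.univ.inf' hne v = ∑ j, M i j * Finset.univ.inf' hne v := by
        rw [← Finset.sum_mul, hrow i, one_mul]
    _ ≤ ∑ j, M i j * v j :=
        Finset.sum_le_sum fun j _ =>
          mul_le_mul_of_nonneg_left (Finset.inf'_le v (Finset.mem_univ j)) (hnn i j)

lemma inf_le_sup (hne : (Finset.univ : Finset (Fin n)).Nonempty) (v : Fin n → ℝ) :
    Finset.univ.inf' hne v ≤ Finset.univ.sup' hne v := by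
  obtain ⟨a, ha⟩ := hne
  exact le_trans (Finset.inf'_le v ha) (Finset.le_sup' v ha)

lemma mulVec_le_contract (hne : (Finset.univ : Finset (Fin n)).Nonempty)
    {M : Matrix (Fin n) (Fin n) ℝ} {v : Fin n → ℝ} {δ : ℝ} (hδ : 0 ≤ δ)
    (hrow : ∀ i, ∑ j, M i j = 1) (hpos : ∀ i j, δ ≤ M i j) (i : Fin n) :
    M.mulVec v i ≤ Finset.univ.sup' hne v -
      δ * (Finset.univ.sup' hne v - Finset.univ.inf' hne v) := by
  obtain ⟨j0, _, hj0⟩ := Finset.exists_mem_eq_inf' hne v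
  set S := Finset.univ.sup' hne v
  set I := Finset.univ.inf' hne v
  have hnn : ∀ a b, 0 ≤ M a b := fun a b => le_trans hδ (hpos a b)
  have hIS : I ≤ S := inf_le_sup hne v
  have hmv : M.mulVec v i = ∑ j, M i j * v j := by
    simp [Matrix.mulVec, dotProduct]
  have hsplit : ∑ j, M i j * v j
      = M i j0 * v j0 + ∑ j ∈ Finset.univ.erase j0, M i j * v j := by
    exact (Finset.add_sum_erase _ _ (Finset.mem_univ j0)).symm
  have herase_sum : ∑ j ∈ Finset.univ.erase j0, M i j = 1 - M i j0 := by
    have := Finset.add_sum_erase Finset.univ (fun j => M i j) (Finset.mem_univ j0)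
    rw [hrow i] at this
    linarith
  have hb : ∑ j ∈ Finset.univ.erase j0, M i j * v j ≤ (1 - M i j0) * S := by
    calc ∑ j ∈ Finset.univ.erase j0, M i j * v j
        ≤ ∑ j ∈ Finset.univ.erase j0, M i j * S :=
          Finset.sum_le_sum fun j _ =>
            mul_le_mul_of_nonneg_left (Finset.le_sup' v (Finset.mem_univ j)) (hnn i j)
      _ = (1 - M i j0) * S := by rw [← Finset.sum_mul, herase_sum]
  have hvj0 : v j0 = I := hj0.symm
  have ht : δ ≤ M i j0 := hpos i j0
  have hMle1 : M i j0 ≤ 1 := by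
    have h2 := herase_sum
    have h3 : 0 ≤ ∑ j ∈ Finset.univ.erase j0, M i j :=
      Finset.sum_nonneg fun j _ => hnn i j
    linarith
  rw [hmv, hsplit, hvj0]
  nlinarith [mul_nonneg (sub_nonneg.2 ht) (sub_nonneg.2 hIS)]

lemma contract_le_mulVec (hne : (Finset.univ : Finset (Fin n)).Nonempty)
    {M : Matrix (Fin n) (Fin n) ℝ} {v : Fin n → ℝ} {δ : ℝ} (hδ : 0 ≤ δ)
    (hrow : ∀ i, ∑ j, M i j = 1) (hpos : ∀ i j, δ ≤ M i j) (i : Fin n) :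
    Finset.univ.inf' hne v +
      δ * (Finset.univ.sup' hne v - Finset.univ.inf' hne v) ≤ M.mulVec v i := by
  obtain ⟨j0, _, hj0⟩ := Finset.exists_mem_eq_sup' hne v
  set S := Finset.univ.sup' hne v
  set I := Finset.univ.inf' hne v
  have hnn : ∀ a b, 0 ≤ M a b := fun a b => le_trans hδ (hpos a b)
  have hIS : I ≤ S := inf_le_sup hne v
  have hmv : M.mulVec v i = ∑ j, M i j * v j := by
    simp [Matrix.mulVec, dotProduct]
  have hsplit : ∑ j, M i j * v j
      = M i j0 * v j0 + ∑ j ∈ Finset.univ.erase j0, M i j * v j := by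
    exact (Finset.add_sum_erase _ _ (Finset.mem_univ j0)).symm
  have herase_sum : ∑ j ∈ Finset.univ.erase j0, M i j = 1 - M i j0 := by
    have := Finset.add_sum_erase Finset.univ (fun j => M i j) (Finset.mem_univ j0)
    rw [hrow i] at this
    linarith
  have hb : (1 - M i j0) * I ≤ ∑ j ∈ Finset.univ.erase j0, M i j * v j := by
    calc (1 - M i j0) * I = ∑ j ∈ Finset.univ.erase j0, M i j * I := by
          rw [← Finset.sum_mul, herase_sum]
      _ ≤ ∑ j ∈ Finset.univ.erase j0, M i j * v j :=
          Finset.sum_le_sum fun j _ =>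
            mul_le_mul_of_nonneg_left (Finset.inf'_le v (Finset.mem_univ j)) (hnn i j)
  have hvj0 : v j0 = S := hj0.symm
  have ht : δ ≤ M i j0 := hpos i j0
  have hMle1 : M i j0 ≤ 1 := by
    have h3 : 0 ≤ ∑ j ∈ Finset.univ.erase j0, M i j :=
      Finset.sum_nonneg fun j _ => hnn i j
    linarith [herase_sum]
  rw [hmv, hsplit, hvj0]
  nlinarith [mul_nonneg (sub_nonneg.2 ht) (sub_nonneg.2 hIS)]


/-- Column `j` of powers of a stochastic matrix with a strictly positive power
converges to a constant. -/
lemma pf_conv (hne : (Finset.univ : Finset (Fin n)).Nonempty)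
    {M : Matrix (Fin n) (Fin n) ℝ}
    (hnn : ∀ i j, 0 ≤ M i j) (hrow : ∀ i, ∑ j, M i j = 1)
    {m : ℕ} (hm : 0 < m) {δ : ℝ} (hδ : 0 < δ) (hδhalf : 2 * δ ≤ 1)
    (hpos : ∀ i j, δ ≤ (M ^ m) i j) (j : Fin n) :
    ∃ c : ℝ, 0 ≤ c ∧ ∀ i, Tendsto (fun k => (M ^ k) i j) atTop (nhds c) := by
  set col : ℕ → Fin n → ℝ := fun k i => (M ^ k) i j with hcol
  have hcol_succ : ∀ k, col (k + 1) = M.mulVec (col k) := by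
    intro k
    funext i
    rw [hcol]
    simp only
    rw [pow_succ' M k, Matrix.mul_apply]
    simp [Matrix.mulVec, dotProduct]
  have hcol_addm : ∀ k, col (m + k) = (M ^ m).mulVec (col k) := by
    intro k
    funext i
    rw [hcol]
    simp only
    rw [pow_add, Matrix.mul_apply]
    simp [Matrix.mulVec, dotProduct]
  have hnnm : ∀ i j, 0 ≤ (M ^ m) i j := pow_entry_nonneg hnn m
  have hrowm : ∀ i, ∑ j, (M ^ m) i j = 1 := pow_row_sum hrow m
  set S : ℕ → ℝ := fun k => Finset.univ.sup' hne (col k) with hS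
  set I : ℕ → ℝ := fun k => Finset.univ.inf' hne (col k) with hI
  have hIS : ∀ k, I k ≤ S k := fun k => inf_le_sup hne (col k)
  have hSanti : ∀ k, S (k + 1) ≤ S k := by
    intro k
    apply Finset.sup'_le
    intro i _
    rw [hcol_succ k]
    exact mulVec_le_sup hne hnn hrow i
  have hImono : ∀ k, I k ≤ I (k + 1) := by
    intro k
    apply Finset.le_inf'
    intro i _
    rw [hcol_succ k]
    exact inf_le_mulVec hne hnn hrow i
  have hSanti' : Antitone S := antitone_nat_of_succ_le hSanti
  have hImono' : Monotone I := monotone_nat_of_le_succ hImono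
  have hInn : ∀ k, 0 ≤ I k := by
    intro k
    apply Finset.le_inf'
    intro i _
    exact pow_entry_nonneg hnn k i j
  have hScontract : ∀ k, S (m + k) ≤ S k - δ * (S k - I k) := by
    intro k
    apply Finset.sup'_le
    intro i _
    rw [hcol_addm k]
    exact mulVec_le_contract hne hδ.le hrowm hpos i
  have hIcontract : ∀ k, I k + δ * (S k - I k) ≤ I (m + k) := by
    intro k
    apply Finset.le_inf'
    intro i _
    rw [hcol_addm k]
    exact contract_le_mulVec hne hδ.le hrowm hpos i
  set osc : ℕ → ℝ := fun k => S k - I k with hosc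
  have hosc_nn : ∀ k, 0 ≤ osc k := fun k => sub_nonneg.2 (hIS k)
  have hosc_contr : ∀ k, osc (m + k) ≤ (1 - 2 * δ) * osc k := by
    intro k
    have h1 := hScontract k
    have h2 := hIcontract k
    simp only [hosc]
    nlinarith
  have hosc_pow : ∀ t, osc (t * m) ≤ (1 - 2 * δ) ^ t * osc 0 := by
    intro t
    induction t with
    | zero => simp
    | succ t ih =>
      have : (t + 1) * m = m + t * m := by ring
      rw [this]
      calc osc (m + t * m) ≤ (1 - 2 * δ) * osc (t * m) := hosc_contr (t * m)
        _ ≤ (1 - 2 * δ) * ((1 - 2 * δ) ^ t * osc 0) :=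
            mul_le_mul_of_nonneg_left ih (by linarith)
        _ = (1 - 2 * δ) ^ (t + 1) * osc 0 := by ring
  -- limits
  have hSbdd : BddBelow (Set.range S) := by
    refine ⟨I 0, ?_⟩
    rintro y ⟨k, rfl⟩
    exact le_trans (hImono' (Nat.zero_le k)) (hIS k)
  have hIbdd : BddAbove (Set.range I) := by
    refine ⟨S 0, ?_⟩
    rintro y ⟨k, rfl⟩
    exact le_trans (hIS k) (hSanti' (Nat.zero_le k))
  have hStend : Tendsto S atTop (nhds (⨅ k, S k)) := tendsto_atTop_ciInf hSanti' hSbdd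
  have hItend : Tendsto I atTop (nhds (⨆ k, I k)) := tendsto_atTop_ciSup hImono' hIbdd
  set c : ℝ := ⨅ k, S k
  set c' : ℝ := ⨆ k, I k
  have hosc_tend : Tendsto osc atTop (nhds (c - c')) := hStend.sub hItend
  -- subsequence along multiples of m tends to 0
  have hsub_tend : Tendsto (fun t => osc (t * m)) atTop (nhds (c - c')) := by
    refine hosc_tend.comp ?_
    exact tendsto_atTop_atTop.mpr fun b => ⟨b, fun a ha => le_trans ha (Nat.le_mul_of_pos_right a hm)⟩
  have hr0 : Tendsto (fun t : ℕ => (1 - 2 * δ) ^ t * osc 0) atTop (nhds 0) := by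
    have : Tendsto (fun t : ℕ => (1 - 2 * δ) ^ t) atTop (nhds 0) := by
      apply tendsto_pow_atTop_nhds_zero_of_abs_lt_one
      rw [abs_lt]; constructor <;> linarith
    simpa using this.mul_const (osc 0)
  have hsub0 : Tendsto (fun t => osc (t * m)) atTop (nhds 0) := by
    apply squeeze_zero (fun t => hosc_nn (t * m)) hosc_pow hr0
  have hcc' : c = c' := by
    have := tendsto_nhds_unique hsub_tend hsub0
    linarith
  refine ⟨c, ?_, ?_⟩
  · rw [hcc']
    have : I 0 ≤ c' := le_ciSup hIbdd 0
    exact le_trans (hInn 0) this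
  · intro i
    have hle1 : ∀ k, I k ≤ col k i := fun k => Finset.inf'_le _ (Finset.mem_univ i)
    have hle2 : ∀ k, col k i ≤ S k := fun k => Finset.le_sup' _ (Finset.mem_univ i)
    have hI_to_c : Tendsto I atTop (nhds c) := by rw [hcc']; exact hItend
    exact tendsto_of_tendsto_of_tendsto_of_le_of_le hI_to_c hStend hle1 hle2

lemma pow_pos_of_path {M : Matrix (Fin n) (Fin n) ℝ} (hnn : ∀ i j, 0 ≤ M i j)
    {E : Fin n → Fin n → Prop} (hE : ∀ a b, E a b → 0 < M a b) :
    ∀ L i j, isPath E i j L → 0 < (M ^ L) i j := by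
  intro L
  induction L with
  | zero =>
    rintro i j ⟨f, hf0, hfL, -⟩
    rw [pow_zero]
    rw [← hf0, ← hfL, Matrix.one_apply_eq]
    norm_num
  | succ L ih =>
    rintro i j ⟨f, hf0, hfL, hstep⟩
    have h1 : 0 < (M ^ L) i (f L) := by
      exact ih i (f L) ⟨f, hf0, rfl, fun l hl => hstep l (Nat.lt_succ_of_lt hl)⟩
    have h2 : 0 < M (f L) j := by
      have := hstep L (Nat.lt_succ_self L)
      rw [hfL] at this
      exact hE _ _ this
    rw [pow_succ, Matrix.mul_apply]
    have hterm : 0 < (M ^ L) i (f L) * M (f L) j := mul_pos h1 h2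
    have : (M ^ L) i (f L) * M (f L) j ≤ ∑ a, (M ^ L) i a * M a j :=
      Finset.single_le_sum (f := fun a => (M ^ L) i a * M a j)
        (fun a _ => mul_nonneg (pow_entry_nonneg hnn L i a) (hnn a j)) (Finset.mem_univ (f L))
    linarith

lemma pow_pos_propagate {M : Matrix (Fin n) (Fin n) ℝ} (hnn : ∀ i j, 0 ≤ M i j)
    (hdiag : ∀ i, 0 < M i i) {i j : Fin n} {L : ℕ} (h : 0 < (M ^ L) i j) :
    ∀ k, L ≤ k → 0 < (M ^ k) i j := by
  intro k
  induction k with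
  | zero => intro hk; have : L = 0 := Nat.le_zero.mp hk; rwa [← this]
  | succ k ih =>
    intro hk
    rcases Nat.lt_or_ge L (k + 1) with h1 | h2
    · have hLk : L ≤ k := Nat.lt_succ_iff.mp h1
      have hk' : 0 < (M ^ k) i j := ih hLk
      rw [pow_succ, Matrix.mul_apply]
      have hterm : 0 < (M ^ k) i j * M j j := mul_pos hk' (hdiag j)
      have : (M ^ k) i j * M j j ≤ ∑ a, (M ^ k) i a * M a j :=
        Finset.single_le_sum (f := fun a => (M ^ k) i a * M a j)
          (fun a _ => mul_nonneg (pow_entry_nonneg hnn k i a) (hnn a j)) (Finset.mem_univ j)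
      linarith
    · have : L = k + 1 := le_antisymm hk h2
      rwa [← this]

/-- Main matrix convergence: a stochastic matrix, positive diagonal,
strongly connected support ⇒ powers converge to a rank-one matrix. -/
lemma pf_main (hn : 2 ≤ n) {M : Matrix (Fin n) (Fin n) ℝ}
    (hnn : ∀ i j, 0 ≤ M i j) (hrow : ∀ i, ∑ j, M i j = 1)
    (hdiag : ∀ i, 0 < M i i)
    {E : Fin n → Fin n → Prop} (hE : ∀ a b, E a b → 0 < M a b)
    (hconn : ∀ i j : Fin n, ∃ L, isPath E i j L) :
    ∃ π : Fin n → ℝ, (∀ i, 0 ≤ π i) ∧ (∑ i, π i = 1) ∧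
      ∀ i j, Tendsto (fun k => (M ^ k) i j) atTop (nhds (π j)) := by
  have hnpos : 0 < n := lt_of_lt_of_le (by norm_num) hn
  have hne : (Finset.univ : Finset (Fin n)).Nonempty :=
    ⟨⟨0, hnpos⟩, Finset.mem_univ _⟩
  have hneP : (Finset.univ : Finset (Fin n × Fin n)).Nonempty :=
    ⟨(⟨0, hnpos⟩, ⟨0, hnpos⟩), Finset.mem_univ _⟩
  -- choose a common power with all entries positive
  set L : Fin n × Fin n → ℕ := fun q => (hconn q.1 q.2).choose with hLdef
  set m : ℕ := (Finset.univ.sup L) + 1 with hmdef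
  have hm : 0 < m := Nat.succ_pos _
  have hmpos : ∀ i j, 0 < (M ^ m) i j := by
    intro i j
    have hL : isPath E i j (L (i, j)) := (hconn i j).choose_spec
    have h1 : 0 < (M ^ (L (i, j))) i j := pow_pos_of_path hnn hE _ i j hL
    exact pow_pos_propagate hnn hdiag h1 m
      (le_trans (Finset.le_sup (Finset.mem_univ (i, j))) (Nat.le_succ _))
  set δ : ℝ := Finset.univ.inf' hneP (fun q => (M ^ m) q.1 q.2) with hδdef
  have hδpos : 0 < δ := by
    rw [Finset.lt_inf'_iff]
    intro q _
    exact hmpos q.1 q.2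
  have hδle : ∀ i j, δ ≤ (M ^ m) i j := fun i j =>
    Finset.inf'_le _ (Finset.mem_univ (i, j))
  have hδhalf : 2 * δ ≤ 1 := by
    set i0 : Fin n := ⟨0, hnpos⟩
    set j0 : Fin n := ⟨0, hnpos⟩
    set j1 : Fin n := ⟨1, lt_of_lt_of_le (by norm_num) hn⟩
    have hne01 : j0 ≠ j1 := by
      intro h
      have := congrArg Fin.val h
      simp [j0, j1] at this
    have hsum : (M ^ m) i0 j0 + (M ^ m) i0 j1 ≤ ∑ j, (M ^ m) i0 j := by
      have hsub : ({j0, j1} : Finset (Fin n)) ⊆ Finset.univ := Finset.subset_univ _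
      have := Finset.sum_le_sum_of_subset_of_nonneg hsub
        (fun j _ _ => pow_entry_nonneg hnn m i0 j)
      rwa [Finset.sum_pair hne01] at this
    rw [pow_row_sum hrow m i0] at hsum
    have h1 : δ ≤ (M ^ m) i0 j0 := hδle i0 j0
    have h2 : δ ≤ (M ^ m) i0 j1 := hδle i0 j1
    linarith
  -- apply pf_conv for each column
  have hcols : ∀ j : Fin n, ∃ c : ℝ, 0 ≤ c ∧
      ∀ i, Tendsto (fun k => (M ^ k) i j) atTop (nhds c) :=
    fun j => pf_conv hne hnn hrow hm hδpos hδhalf hδle j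
  choose π hπnn hπtend using hcols
  refine ⟨π, hπnn, ?_, fun i j => hπtend j i⟩
  -- sum of limits is 1
  set i0 : Fin n := ⟨0, hnpos⟩
  have h1 : Tendsto (fun k => ∑ j, (M ^ k) i0 j) atTop (nhds (∑ j, π j)) :=
    tendsto_finset_sum _ (fun j _ => hπtend j i0)
  have h2 : Tendsto (fun k => ∑ j, (M ^ k) i0 j) atTop (nhds 1) := by
    have : (fun k => ∑ j, (M ^ k) i0 j) = fun _ => (1 : ℝ) := by
      funext k; exact pow_row_sum hrow k i0
    rw [this]; exact tendsto_const_nhds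
  exact (tendsto_nhds_unique h1 h2)

/-- deterministic iteration of the belief dynamics given a sequence of matrices. -/
def xiter (x0 : Fin n → ℝ) : ℕ → (ℕ → Matrix (Fin n) (Fin n) ℝ) → (Fin n → ℝ)
  | 0, _ => x0
  | (k+1), Ws => (Ws k).mulVec (xiter x0 k Ws)

lemma xiter_congr (x0 : Fin n → ℝ) (k : ℕ) {Ws Ws' : ℕ → Matrix (Fin n) (Fin n) ℝ}
    (h : ∀ l < k, Ws l = Ws' l) : xiter x0 k Ws = xiter x0 k Ws' := by
  induction k with
  | zero => rfl
  | succ k ih =>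
    show (Ws k).mulVec (xiter x0 k Ws) = (Ws' k).mulVec (xiter x0 k Ws')
    rw [h k (Nat.lt_succ_self k), ih (fun l hl => h l (Nat.lt_succ_of_lt hl))]

lemma xiter_measurable (x0 : Fin n → ℝ) (k : ℕ) :
    ∀ j, Measurable (fun Ws : ℕ → Matrix (Fin n) (Fin n) ℝ => xiter x0 k Ws j) := by
  induction k with
  | zero => exact fun j => measurable_const
  | succ k ih =>
    intro j
    have : (fun Ws : ℕ → Matrix (Fin n) (Fin n) ℝ => xiter x0 (k+1) Ws j)
        = fun Ws => ∑ b, Ws k j b * xiter x0 k Ws b := by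
      funext Ws
      show (Ws k).mulVec (xiter x0 k Ws) j = _
      simp [Matrix.mulVec, dotProduct]
    rw [this]
    apply Finset.measurable_sum
    intro b _
    have h1 : Measurable (fun Ws : ℕ → Matrix (Fin n) (Fin n) ℝ => Ws k j b) :=
      (measurable_pi_apply b).comp ((measurable_pi_apply j).comp (measurable_pi_apply k))
    exact h1.mul (ih b)


lemma Amat_apply (a b i j : Fin n) : Amat a b i j =
    (if i = j then (1:ℝ) else 0) -
      2⁻¹ * (((if i = a then (1:ℝ) else 0) - if i = b then 1 else 0) *
        ((if j = a then (1:ℝ) else 0) - if j = b then 1 else 0)) := by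
  simp [Amat, eVec, Matrix.sub_apply, Matrix.smul_apply, Matrix.one_apply,
    Matrix.vecMulVec_apply, Pi.sub_apply]

lemma Jmat_apply (ε : ℝ) (a b i j : Fin n) : Jmat ε a b i j =
    (if i = j then (1:ℝ) else 0) -
      (1 - ε) * ((if i = a then (1:ℝ) else 0) *
        ((if j = a then (1:ℝ) else 0) - if j = b then 1 else 0)) := by
  simp [Jmat, eVec, Matrix.sub_apply, Matrix.smul_apply, Matrix.one_apply,
    Matrix.vecMulVec_apply, Pi.sub_apply]

lemma Amat_nonneg (a b i j : Fin n) : 0 ≤ Amat a b i j := by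
  rw [Amat_apply]
  split_ifs <;> simp_all <;> norm_num

lemma Jmat_nonneg {ε : ℝ} (h0 : 0 ≤ ε) (h1 : ε ≤ 1) (a b i j : Fin n) :
    0 ≤ Jmat ε a b i j := by
  rw [Jmat_apply]
  split_ifs <;> simp_all <;> norm_num <;> linarith

lemma eVec_sum (a : Fin n) : ∑ k, eVec a k = 1 := by
  simp [eVec, Finset.sum_ite_eq']

lemma Amat_row (a b i : Fin n) : ∑ j, Amat a b i j = 1 := by
  have h : ∀ j, Amat a b i j = (1 : Matrix (Fin n) (Fin n) ℝ) i j
      - 2⁻¹ * ((eVec a i - eVec b i) * (eVec a j - eVec b j)) := by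
    intro j
    simp [Amat, Matrix.sub_apply, Matrix.smul_apply, Matrix.vecMulVec_apply, Pi.sub_apply]
  rw [Finset.sum_congr rfl fun j _ => h j, Finset.sum_sub_distrib, ← Finset.mul_sum,
    ← Finset.mul_sum]
  have hsum : ∑ j, (eVec a j - eVec b j) = 0 := by
    rw [Finset.sum_sub_distrib, eVec_sum, eVec_sum]; ring
  have hone : ∑ j, (1 : Matrix (Fin n) (Fin n) ℝ) i j = 1 := by simp [Matrix.one_apply]
  rw [hsum, hone]
  ring

lemma Jmat_row (ε : ℝ) (a b i : Fin n) : ∑ j, Jmat ε a b i j = 1 := by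
  have h : ∀ j, Jmat ε a b i j = (1 : Matrix (Fin n) (Fin n) ℝ) i j
      - (1 - ε) * (eVec a i * (eVec a j - eVec b j)) := by
    intro j
    simp [Jmat, Matrix.sub_apply, Matrix.smul_apply, Matrix.vecMulVec_apply, Pi.sub_apply]
  rw [Finset.sum_congr rfl fun j _ => h j, Finset.sum_sub_distrib, ← Finset.mul_sum,
    ← Finset.mul_sum]
  have hsum : ∑ j, (eVec a j - eVec b j) = 0 := by
    rw [Finset.sum_sub_distrib, eVec_sum, eVec_sum]; ring
  have hone : ∑ j, (1 : Matrix (Fin n) (Fin n) ℝ) i j = 1 := by simp [Matrix.one_apply]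
  rw [hsum, hone]
  ring

lemma Amat_diag {ε : ℝ} (hε : ε ≤ 1/2) (a b i : Fin n) : ε ≤ Amat a b i i := by
  rw [Amat_apply]
  split_ifs <;> simp_all <;> norm_num <;> linarith

lemma Jmat_diag {ε : ℝ} (hε1 : ε ≤ 1) (a b i : Fin n) : ε ≤ Jmat ε a b i i := by
  rw [Jmat_apply]
  split_ifs <;> simp_all <;> norm_num <;> linarith

lemma Amat_edge {a b : Fin n} (hab : a ≠ b) : Amat a b a b = 1/2 := by
  rw [Amat_apply]
  simp [hab, hab.symm]

lemma Jmat_edge {ε : ℝ} {a b : Fin n} (hab : a ≠ b) : Jmat ε a b a b = 1 - ε := by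
  rw [Jmat_apply]
  simp [hab, hab.symm]

instance matSingleton : MeasurableSingletonClass (Matrix (Fin n) (Fin n) ℝ) :=
  inferInstanceAs (MeasurableSingletonClass (∀ _ : Fin n, Fin n → ℝ))

lemma integrable_dirac'' {X : Type*} [MeasurableSpace X] [MeasurableSingletonClass X]
    (f : X → ℝ) (a : X) : Integrable f (Measure.dirac a) := by
  have h : (fun _ => f a) =ᵐ[Measure.dirac a] f := by
    rw [Filter.EventuallyEq, ae_dirac_eq]
    exact Filter.eventually_pure.2 rfl
  exact (integrable_const (f a)).congr h

lemma lawW_integral (p α β γ : Fin n → Fin n → ℝ)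
    (hp : ∀ i j, 0 ≤ p i j) (hα : ∀ i j, 0 ≤ α i j) (hβ : ∀ i j, 0 ≤ β i j)
    (hγ : ∀ i j, 0 ≤ γ i j) (ε : ℝ) (f : Matrix (Fin n) (Fin n) ℝ → ℝ) :
    ∫ M, f M ∂(lawW p α β γ ε) =
      ∑ i, ∑ j, (p i j * β i j / n * f (Amat i j) + p i j * α i j / n * f (Jmat ε i j)
        + p i j * γ i j / n * f 1) := by
  have hnn : (0:ℝ) ≤ n := Nat.cast_nonneg n
  have hint : ∀ (i j : Fin n), Integrable f
      ((ENNReal.ofReal (p i j * β i j / n) • Measure.dirac (Amat i j) +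
        ENNReal.ofReal (p i j * α i j / n) • Measure.dirac (Jmat ε i j) +
        ENNReal.ofReal (p i j * γ i j / n) • Measure.dirac (1 : Matrix (Fin n) (Fin n) ℝ))) := by
    intro i j
    refine Integrable.add_measure (Integrable.add_measure ?_ ?_) ?_ <;>
      exact (integrable_dirac'' f _).smul_measure ENNReal.ofReal_ne_top
  rw [lawW, integral_finset_sum_measure (fun i _ => by
    rw [integrable_finset_sum_measure]
    exact fun j _ => hint i j)]
  refine Finset.sum_congr rfl fun i _ => ?_
  rw [integral_finset_sum_measure (fun j _ => hint i j)]
  refine Finset.sum_congr rfl fun j _ => ?_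
  rw [integral_add_measure (Integrable.add_measure
        ((integrable_dirac'' f _).smul_measure ENNReal.ofReal_ne_top)
        ((integrable_dirac'' f _).smul_measure ENNReal.ofReal_ne_top))
      ((integrable_dirac'' f _).smul_measure ENNReal.ofReal_ne_top),
    integral_add_measure ((integrable_dirac'' f _).smul_measure ENNReal.ofReal_ne_top)
      ((integrable_dirac'' f _).smul_measure ENNReal.ofReal_ne_top)]
  rw [integral_smul_measure, integral_smul_measure, integral_smul_measure,
    integral_dirac, integral_dirac, integral_dirac]
  rw [ENNReal.toReal_ofReal (div_nonneg (mul_nonneg (hp i j) (hβ i j)) hnn),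
    ENNReal.toReal_ofReal (div_nonneg (mul_nonneg (hp i j) (hα i j)) hnn),
    ENNReal.toReal_ofReal (div_nonneg (mul_nonneg (hp i j) (hγ i j)) hnn)]
  simp [smul_eq_mul]


end Stmt3Aux


/-- Theorem 2: under Assumptions 1–3, letting `W̃ = E[W(k)]` be the mean
interaction matrix and `x̄` the almost-sure consensus limit of the beliefs,
(a) `W̃^k` converges to the rank-one stochastic matrix `e π̄ᵀ` for a stochastic
vector `π̄` (the consensus distribution), and (b) `E[x̄] = π̄ᵀ x(0)`. -/
theorem stmt_3 {n : ℕ} (hn : 2 ≤ n)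
    (p α β γ : Fin n → Fin n → ℝ)
    (hp_diag : ∀ i, p i i = 0) (hp_nonneg : ∀ i j, 0 ≤ p i j) (hp_row : ∀ i, ∑ j, p i j = 1)
    (hconn : ∀ i j : Fin n, ∃ L, isPath (fun a b => 0 < p a b) i j L)
    (hα : ∀ i j, 0 ≤ α i j) (hβ : ∀ i j, 0 ≤ β i j) (hγ : ∀ i j, 0 ≤ γ i j)
    (habg : ∀ i j, α i j + β i j + γ i j = 1)
    (hint : ∀ i j, 0 < p i j → 0 < β i j + α i j)
    (ε : ℝ) (hε0 : 0 < ε) (hε : ε ≤ 1 / 2)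
    {Ω : Type*} [MeasureSpace Ω] [IsProbabilityMeasure (ℙ : Measure Ω)]
    (W : ℕ → Ω → Matrix (Fin n) (Fin n) ℝ)
    (hWmeas : ∀ k, Measurable (W k))
    (hWlaw : ∀ k, Measure.map (W k) ℙ = lawW p α β γ ε)
    (hWindep : iIndepFun (m := fun _ => matMeas) W ℙ)
    (x0 : Fin n → ℝ) (x : ℕ → Ω → Fin n → ℝ)
    (hx0 : ∀ ω, x 0 ω = x0)
    (hxrec : ∀ k ω, x (k + 1) ω = (W k ω).mulVec (x k ω))
    -- the mean interaction matrix W̃ = E[W(k)]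
    (Wtilde : Matrix (Fin n) (Fin n) ℝ)
    (hWtilde : ∀ i j, Wtilde i j = ∫ ω, W 0 ω i j ∂(ℙ : Measure Ω))
    -- x̄ is the almost-sure consensus limit of the beliefs
    (xbar : Ω → ℝ) (hxbar_meas : Measurable xbar)
    (hxbar : ∀ᵐ ω ∂(ℙ : Measure Ω), ∀ i, Tendsto (fun k => x k ω i) atTop (nhds (xbar ω))) :
    ∃ πbar : Fin n → ℝ, (∀ i, 0 ≤ πbar i) ∧ (∑ i, πbar i = 1) ∧
      (∀ i j, Tendsto (fun k => (Wtilde ^ k) i j) atTop (nhds (πbar j))) ∧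
      ∫ ω, xbar ω ∂(ℙ : Measure Ω) = ∑ i, πbar i * x0 i := by
    classical
  have hnpos : 0 < n := lt_of_lt_of_le (by norm_num) hn
  have hnR : (0:ℝ) < n := by exact_mod_cast hnpos
  have hε1 : ε ≤ 1 := by linarith
  have hne : (Finset.univ : Finset (Fin n)).Nonempty := ⟨⟨0, hnpos⟩, Finset.mem_univ _⟩
  have heval_meas : ∀ i j : Fin n, Measurable (fun M : Matrix (Fin n) (Fin n) ℝ => M i j) :=
    fun i j => (measurable_pi_apply j).comp (measurable_pi_apply i)
  -- the mean matrix, explicitly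
  have hEW : ∀ (k : ℕ) (i j : Fin n), ∫ ω, W k ω i j ∂(ℙ : Measure Ω)
      = ∑ a, ∑ b, (p a b * β a b / n * Amat a b i j + p a b * α a b / n * Jmat ε a b i j
        + p a b * γ a b / n * (1 : Matrix (Fin n) (Fin n) ℝ) i j) := by
    intro k i j
    have h1 : ∫ M, (fun M : Matrix (Fin n) (Fin n) ℝ => M i j) M
          ∂(Measure.map (W k) (ℙ : Measure Ω))
        = ∫ ω, W k ω i j ∂(ℙ : Measure Ω) :=
      integral_map (hWmeas k).aemeasurable (heval_meas i j).aestronglyMeasurable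
    rw [← h1, hWlaw k, Stmt3Aux.lawW_integral p α β γ hp_nonneg hα hβ hγ ε (fun M => M i j)]
  have hWt : ∀ i j, Wtilde i j
      = ∑ a, ∑ b, (p a b * β a b / n * Amat a b i j + p a b * α a b / n * Jmat ε a b i j
        + p a b * γ a b / n * (1 : Matrix (Fin n) (Fin n) ℝ) i j) := by
    intro i j; rw [hWtilde i j, hEW 0 i j]
  have hEW' : ∀ (k : ℕ) (i j : Fin n), ∫ ω, W k ω i j ∂(ℙ : Measure Ω) = Wtilde i j := by
    intro k i j; rw [hEW k i j, ← hWt]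
  have hcoeff : ∀ a b, p a b * β a b / n + p a b * α a b / n + p a b * γ a b / n = p a b / n := by
    intro a b
    have h : p a b * β a b / n + p a b * α a b / n + p a b * γ a b / n
        = p a b * (α a b + β a b + γ a b) / n := by ring
    rw [h, habg a b, mul_one]
  have hcoeff_sum :
      ∑ a, ∑ b, (p a b * β a b / n + p a b * α a b / n + p a b * γ a b / n) = 1 := by
    have h1 : ∀ a, ∑ b, (p a b * β a b / n + p a b * α a b / n + p a b * γ a b / n)
        = (1:ℝ) / n := by
      intro a
      rw [Finset.sum_congr rfl fun b _ => hcoeff a b, ← Finset.sum_div, hp_row a]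
    rw [Finset.sum_congr rfl fun a _ => h1 a, Finset.sum_const, Finset.card_univ,
      Fintype.card_fin, nsmul_eq_mul]
    field_simp
  have hone_nonneg : ∀ i j : Fin n, 0 ≤ (1 : Matrix (Fin n) (Fin n) ℝ) i j := by
    intro i j; rw [Matrix.one_apply]; split <;> norm_num
  have hone_row : ∀ i : Fin n, ∑ j, (1 : Matrix (Fin n) (Fin n) ℝ) i j = 1 := by
    intro i; simp [Matrix.one_apply]
  have hcnn : ∀ a b : Fin n, 0 ≤ p a b * β a b / n ∧ 0 ≤ p a b * α a b / n
      ∧ 0 ≤ p a b * γ a b / n := by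
    intro a b
    exact ⟨div_nonneg (mul_nonneg (hp_nonneg a b) (hβ a b)) hnR.le,
      div_nonneg (mul_nonneg (hp_nonneg a b) (hα a b)) hnR.le,
      div_nonneg (mul_nonneg (hp_nonneg a b) (hγ a b)) hnR.le⟩
  have hWt_nonneg : ∀ i j, 0 ≤ Wtilde i j := by
    intro i j
    rw [hWt]
    refine Finset.sum_nonneg fun a _ => Finset.sum_nonneg fun b _ => ?_
    obtain ⟨h1, h2, h3⟩ := hcnn a b
    have := Stmt3Aux.Amat_nonneg a b i j
    have := Stmt3Aux.Jmat_nonneg hε0.le hε1 a b i j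
    have := hone_nonneg i j
    positivity
  have hWt_row : ∀ i, ∑ j, Wtilde i j = 1 := by
    intro i
    rw [Finset.sum_congr rfl fun j _ => hWt i j]
    rw [Finset.sum_comm]
    rw [← hcoeff_sum]
    refine Finset.sum_congr rfl fun a _ => ?_
    rw [Finset.sum_comm]
    refine Finset.sum_congr rfl fun b _ => ?_
    rw [Finset.sum_add_distrib, Finset.sum_add_distrib, ← Finset.mul_sum, ← Finset.mul_sum,
      ← Finset.mul_sum, Stmt3Aux.Amat_row, Stmt3Aux.Jmat_row, hone_row, mul_one, mul_one, mul_one]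
  have hWt_diag : ∀ i, 0 < Wtilde i i := by
    intro i
    have hlow : ε ≤ Wtilde i i := by
      rw [hWt]
      have h1 : ∀ a b : Fin n,
          (p a b * β a b / n + p a b * α a b / n + p a b * γ a b / n) * ε
            ≤ p a b * β a b / n * Amat a b i i + p a b * α a b / n * Jmat ε a b i i
              + p a b * γ a b / n * (1 : Matrix (Fin n) (Fin n) ℝ) i i := by
        intro a b
        obtain ⟨h1, h2, h3⟩ := hcnn a b
        have hA := Stmt3Aux.Amat_diag hε a b i
        have hJ := Stmt3Aux.Jmat_diag hε1 a b i
        have hone : (1 : Matrix (Fin n) (Fin n) ℝ) i i = 1 := Matrix.one_apply_eq i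
        rw [hone]
        nlinarith
      calc ε = (∑ a, ∑ b, (p a b * β a b / n + p a b * α a b / n + p a b * γ a b / n)) * ε := by
            rw [hcoeff_sum, one_mul]
        _ = ∑ a, ∑ b, (p a b * β a b / n + p a b * α a b / n + p a b * γ a b / n) * ε := by
            rw [Finset.sum_mul]
            exact Finset.sum_congr rfl fun a _ => by rw [Finset.sum_mul]
        _ ≤ _ := Finset.sum_le_sum fun a _ => Finset.sum_le_sum fun b _ => h1 a b
    linarith
  have hWt_edge : ∀ i j : Fin n, 0 < p i j → 0 < Wtilde i j := by
    intro i j hpij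
    have hij : i ≠ j := by
      intro h
      rw [h, hp_diag j] at hpij
      exact lt_irrefl 0 hpij
    have hterm_nn : ∀ a b : Fin n, 0 ≤ p a b * β a b / n * Amat a b i j
        + p a b * α a b / n * Jmat ε a b i j
        + p a b * γ a b / n * (1 : Matrix (Fin n) (Fin n) ℝ) i j := by
      intro a b
      obtain ⟨h1, h2, h3⟩ := hcnn a b
      have := Stmt3Aux.Amat_nonneg a b i j
      have := Stmt3Aux.Jmat_nonneg hε0.le hε1 a b i j
      have := hone_nonneg i j
      positivity
    have hkey : 0 < p i j * β i j / n * Amat i j i j + p i j * α i j / n * Jmat ε i j i j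
        + p i j * γ i j / n * (1 : Matrix (Fin n) (Fin n) ℝ) i j := by
      rw [Stmt3Aux.Amat_edge hij, Stmt3Aux.Jmat_edge hij, Matrix.one_apply_ne hij, mul_zero,
        add_zero]
      have hab := hint i j hpij
      have h1ε : (1:ℝ)/2 ≤ 1 - ε := by linarith
      have hβn := hβ i j
      have hαn := hα i j
      have e1 : p i j * β i j / n * (1/2) = p i j / n * (β i j * (1/2)) := by ring
      have e2 : p i j * α i j / n * (1 - ε) = p i j / n * (α i j * (1 - ε)) := by ring
      rw [e1, e2, ← mul_add]
      apply mul_pos (div_pos hpij hnR)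
      nlinarith
    rw [hWt]
    calc (0:ℝ) < _ := hkey
      _ ≤ ∑ b, (p i b * β i b / n * Amat i b i j + p i b * α i b / n * Jmat ε i b i j
          + p i b * γ i b / n * (1 : Matrix (Fin n) (Fin n) ℝ) i j) :=
          Finset.single_le_sum (fun b _ => hterm_nn i b) (Finset.mem_univ j)
      _ ≤ _ := Finset.single_le_sum
          (f := fun a => ∑ b, (p a b * β a b / n * Amat a b i j
            + p a b * α a b / n * Jmat ε a b i j
            + p a b * γ a b / n * (1 : Matrix (Fin n) (Fin n) ℝ) i j))
          (fun a _ => Finset.sum_nonneg fun b _ => hterm_nn a b) (Finset.mem_univ i)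
  obtain ⟨πb, hπnn, hπsum, hπtend⟩ :=
    Stmt3Aux.pf_main hn hWt_nonneg hWt_row hWt_diag hWt_edge hconn
  -- part (b)
  set C : ℝ := Finset.univ.sup' hne (fun i => |x0 i|) with hCdef
  have hC0 : ∀ i, |x0 i| ≤ C := fun i => Finset.le_sup' (fun i => |x0 i|) (Finset.mem_univ i)
  set SSet : Set (Matrix (Fin n) (Fin n) ℝ) :=
    {M | (∀ i j, 0 ≤ M i j) ∧ ∀ i, ∑ j, M i j = 1} with hSdef
  have hSmeas : MeasurableSet SSet := by
    have : SSet = (⋂ i, ⋂ j, {M : Matrix (Fin n) (Fin n) ℝ | 0 ≤ M i j})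
        ∩ ⋂ i, {M : Matrix (Fin n) (Fin n) ℝ | ∑ j, M i j = 1} := by
      ext M
      simp [hSdef, Set.mem_iInter]
    rw [this]
    refine MeasurableSet.inter ?_ ?_
    · exact MeasurableSet.iInter fun i => MeasurableSet.iInter fun j =>
        measurableSet_le measurable_const (heval_meas i j)
    · refine MeasurableSet.iInter fun i => ?_
      exact (Finset.measurable_sum Finset.univ fun j _ => heval_meas i j)
        (measurableSet_singleton 1)
  have hAmem : ∀ a b : Fin n, Amat a b ∈ SSet :=
    fun a b => ⟨Stmt3Aux.Amat_nonneg a b, Stmt3Aux.Amat_row a b⟩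
  have hJmem : ∀ a b : Fin n, Jmat ε a b ∈ SSet :=
    fun a b => ⟨Stmt3Aux.Jmat_nonneg hε0.le hε1 a b, Stmt3Aux.Jmat_row ε a b⟩
  have hImem : (1 : Matrix (Fin n) (Fin n) ℝ) ∈ SSet := ⟨hone_nonneg, hone_row⟩
  have hae : ∀ k, ∀ᵐ ω ∂(ℙ : Measure Ω), W k ω ∈ SSet := by
    intro k
    rw [ae_iff]
    have he : {ω | ¬ W k ω ∈ SSet} = W k ⁻¹' SSetᶜ := rfl
    rw [he, ← Measure.map_apply (hWmeas k) hSmeas.compl, hWlaw k, lawW,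
      Measure.finset_sum_apply]
    refine Finset.sum_eq_zero fun a _ => ?_
    rw [Measure.finset_sum_apply]
    refine Finset.sum_eq_zero fun b _ => ?_
    rw [Measure.add_apply, Measure.add_apply, Measure.smul_apply, Measure.smul_apply,
      Measure.smul_apply, Measure.dirac_apply' _ hSmeas.compl,
      Measure.dirac_apply' _ hSmeas.compl, Measure.dirac_apply' _ hSmeas.compl]
    rw [Set.indicator_of_notMem (by simpa using hAmem a b),
      Set.indicator_of_notMem (by simpa using hJmem a b),
      Set.indicator_of_notMem (by simpa using hImem)]
    simp
  have hstoch : ∀ᵐ ω ∂(ℙ : Measure Ω), ∀ k, W k ω ∈ SSet := ae_all_iff.2 hae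
  have hbound : ∀ᵐ ω ∂(ℙ : Measure Ω), ∀ k i, |x k ω i| ≤ C := by
    filter_upwards [hstoch] with ω hω
    intro k
    induction k with
    | zero => intro i; rw [hx0]; exact hC0 i
    | succ k ih =>
      intro i
      have hrec : x (k+1) ω i = ∑ j, W k ω i j * x k ω j := by
        rw [hxrec]; simp [Matrix.mulVec, dotProduct]
      rw [hrec]
      obtain ⟨hnnW, hrowW⟩ := hω k
      calc |∑ j, W k ω i j * x k ω j| ≤ ∑ j, |W k ω i j * x k ω j| :=
            Finset.abs_sum_le_sum_abs _ _
        _ ≤ ∑ j, W k ω i j * C := by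
            refine Finset.sum_le_sum fun j _ => ?_
            rw [abs_mul, abs_of_nonneg (hnnW i j)]
            exact mul_le_mul_of_nonneg_left (ih j) (hnnW i j)
        _ = C := by rw [← Finset.sum_mul, hrowW i, one_mul]
  have hxeq : ∀ k ω, x k ω = Stmt3Aux.xiter x0 k (fun l => W l ω) := by
    intro k
    induction k with
    | zero => intro ω; rw [hx0]; rfl
    | succ k ih =>
      intro ω
      rw [hxrec]
      show (W k ω).mulVec (x k ω) = (W k ω).mulVec (Stmt3Aux.xiter x0 k (fun l => W l ω))
      rw [ih ω]
  have hWseq_meas : Measurable (fun ω (l : ℕ) => W l ω) :=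
    measurable_pi_lambda _ fun l => hWmeas l
  have hxmeas : ∀ k i, Measurable (fun ω => x k ω i) := by
    intro k i
    have h1 := (Stmt3Aux.xiter_measurable x0 k i).comp hWseq_meas
    have heq : (fun ω => x k ω i)
        = fun ω => Stmt3Aux.xiter x0 k (fun l => W l ω) i :=
      funext fun ω => by rw [hxeq k ω]
    rw [heq]; exact h1
  have hxint : ∀ k i, Integrable (fun ω => x k ω i) (ℙ : Measure Ω) := by
    intro k i
    refine Integrable.mono' (integrable_const C) (hxmeas k i).aestronglyMeasurable ?_
    filter_upwards [hbound] with ω hω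
    simpa [Real.norm_eq_abs] using hω k i
  have hind : ∀ (k : ℕ) (i j : Fin n),
      IndepFun (fun ω => x k ω j) (fun ω => W k ω i j) (ℙ : Measure Ω) := by
    intro k i j
    have hdisj : Disjoint (Finset.range k) ({k} : Finset ℕ) := by
      simp [Finset.disjoint_singleton_right]
    have h := hWindep.indepFun_finset (Finset.range k) {k} hdisj hWmeas
    set φ : (↥(Finset.range k) → Matrix (Fin n) (Fin n) ℝ) → ℝ :=
      fun t => Stmt3Aux.xiter x0 k
        (fun l => if h : l ∈ Finset.range k then t ⟨l, h⟩ else 1) j with hφdef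
    set ψ : (↥({k} : Finset ℕ) → Matrix (Fin n) (Fin n) ℝ) → ℝ :=
      fun t => t ⟨k, Finset.mem_singleton_self k⟩ i j with hψdef
    have hφ : Measurable φ := by
      apply (Stmt3Aux.xiter_measurable x0 k j).comp
      apply measurable_pi_lambda
      intro l
      by_cases hl : l ∈ Finset.range k
      · simpa [hl] using measurable_pi_apply (⟨l, hl⟩ : ↥(Finset.range k))
      · simpa [hl] using (measurable_const :
          Measurable (fun _ : (↥(Finset.range k) → Matrix (Fin n) (Fin n) ℝ) =>
            (1 : Matrix (Fin n) (Fin n) ℝ)))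
    have hψ : Measurable ψ := (heval_meas i j).comp (measurable_pi_apply _)
    have h2 := h.comp hφ hψ
    have e1 : (φ ∘ fun ω (l : ↥(Finset.range k)) => W l ω)
        = fun ω => x k ω j := by
      funext ω
      show Stmt3Aux.xiter x0 k
        (fun l => if h : l ∈ Finset.range k then W l ω else 1) j = x k ω j
      have hc := Stmt3Aux.xiter_congr x0 k
        (Ws := fun l => if h : l ∈ Finset.range k then W l ω else 1)
        (Ws' := fun l => W l ω)
        (fun l hl => by simp [Finset.mem_range.mpr hl])
      rw [hc, hxeq k ω]
    have e2 : (ψ ∘ fun ω (l : ↥({k} : Finset ℕ)) => W l ω)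
        = fun ω => W k ω i j := rfl
    rw [e1, e2] at h2
    exact h2
  have hmean : ∀ k i, ∫ ω, x k ω i ∂(ℙ : Measure Ω) = ∑ j, (Wtilde ^ k) i j * x0 j := by
    intro k
    induction k with
    | zero =>
      intro i
      have h1 : ∫ ω, x 0 ω i ∂(ℙ : Measure Ω) = x0 i := by
        simp [hx0]
      rw [h1, pow_zero]
      simp [Matrix.one_apply]
    | succ k ih =>
      intro i
      have hrec : (fun ω => x (k+1) ω i) = fun ω => ∑ j, W k ω i j * x k ω j := by
        funext ω; rw [hxrec]; simp [Matrix.mulVec, dotProduct]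
      have hintprod : ∀ j, Integrable (fun ω => W k ω i j * x k ω j) (ℙ : Measure Ω) := by
        intro j
        refine Integrable.mono' (integrable_const C)
          ((((heval_meas i j).comp (hWmeas k)).mul (hxmeas k j)).aestronglyMeasurable) ?_
        filter_upwards [hstoch, hbound] with ω hω hb
        obtain ⟨hnnW, hrowW⟩ := hω k
        have hle1 : W k ω i j ≤ 1 := by
          have h := Finset.single_le_sum (f := fun b => W k ω i b)
            (fun b _ => hnnW i b) (Finset.mem_univ j)
          rw [hrowW i] at h
          exact h
        rw [Real.norm_eq_abs, abs_mul, abs_of_nonneg (hnnW i j)]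
        calc W k ω i j * |x k ω j| ≤ 1 * C :=
              mul_le_mul hle1 (hb k j) (abs_nonneg _) zero_le_one
          _ = C := one_mul C
      rw [hrec, integral_finset_sum _ (fun j _ => hintprod j)]
      have hsplit : ∀ j : Fin n, ∫ ω, W k ω i j * x k ω j ∂(ℙ : Measure Ω)
          = Wtilde i j * ∫ ω, x k ω j ∂(ℙ : Measure Ω) := by
        intro j
        have h := (hind k i j).symm.integral_fun_mul_eq_mul_integral
          (((heval_meas i j).comp (hWmeas k)).aestronglyMeasurable)
          ((hxmeas k j).aestronglyMeasurable)
        rw [h, hEW' k i j]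
      calc ∑ j, ∫ ω, W k ω i j * x k ω j ∂(ℙ : Measure Ω)
          = ∑ j, Wtilde i j * ∫ ω, x k ω j ∂(ℙ : Measure Ω) :=
            Finset.sum_congr rfl fun j _ => hsplit j
        _ = ∑ j, Wtilde i j * ∑ b, (Wtilde ^ k) j b * x0 b :=
            Finset.sum_congr rfl fun j _ => by rw [ih j]
        _ = ∑ b, (Wtilde ^ (k+1)) i b * x0 b := by
            rw [pow_succ' Wtilde k]
            simp only [Matrix.mul_apply, Finset.mul_sum, Finset.sum_mul]
            rw [Finset.sum_comm]
            refine Finset.sum_congr rfl fun b _ => Finset.sum_congr rfl fun j _ => by ring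
  set i0 : Fin n := ⟨0, hnpos⟩
  have hlim1 : Tendsto (fun k => ∫ ω, x k ω i0 ∂(ℙ : Measure Ω)) atTop
      (nhds (∫ ω, xbar ω ∂(ℙ : Measure Ω))) := by
    refine tendsto_integral_of_dominated_convergence (fun _ => C)
      (fun k => (hxmeas k i0).aestronglyMeasurable) (integrable_const C)
      (fun k => ?_) ?_
    · filter_upwards [hbound] with ω hb
      simpa [Real.norm_eq_abs] using hb k i0
    · filter_upwards [hxbar] with ω hω
      exact hω i0
  have hlim2 : Tendsto (fun k => ∫ ω, x k ω i0 ∂(ℙ : Measure Ω)) atTop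
      (nhds (∑ j, πb j * x0 j)) := by
    have heq : (fun k => ∫ ω, x k ω i0 ∂(ℙ : Measure Ω))
        = fun k => ∑ j, (Wtilde ^ k) i0 j * x0 j := funext fun k => hmean k i0
    rw [heq]
    exact tendsto_finset_sum _ fun j _ => (hπtend i0 j).mul_const (x0 j)
  exact ⟨πb, hπnn, hπsum, hπtend, tendsto_nhds_unique hlim1 hlim2⟩
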